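/- Let J = diag(β_k)·Q − diag(r_k+γ_k) (the Jacobian block of the disease-free equilibrium of the SIS coinfection model with host classes). If R_0 < 1 then every eigenvalue of J has strictly negative real part (the disease-free equilibrium is linearly stable); if R_0 > 1 then J has an eigenvalue with strictly positive real part (the disease-free equilibrium is unstable). -/

import Mathlib

open Matrix

set_option linter.unusedSectionVars false
set_option linter.unusedVariables false
set_option maxHeartbeats 1000000

/-- Spectral radius of a real matrix, via its complex spectrum. -/
noncomputable def specRad {n : Type*} [Fintype n] [DecidableEq n] (M : Matrix n n ℝ) : ℝ :=
  sSup {x : ℝ | ∃ μ : ℂ, μ ∈ spectrum ℂ (M.map Complex.ofReal) ∧ x = ‖μ‖}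

section Aux
variable {K : Type*} [Fintype K] [DecidableEq K] [Nonempty K]

lemma pow_entry_nonneg (A : Matrix K K ℝ) (hA : ∀ k s, 0 ≤ A k s) :
    ∀ n k s, 0 ≤ (A ^ n) k s := by
  intro n
  induction n with
  | zero =>
    intro k s
    by_cases h : k = s <;> simp [h, Matrix.one_apply]
  | succ n ih =>
    intro k s
    rw [pow_succ, Matrix.mul_apply]
    exact Finset.sum_nonneg fun t _ => mul_nonneg (ih k t) (hA t s)

lemma wielandt (A : Matrix K K ℝ) (hA : ∀ k s, 0 ≤ A k s)
    (c : ℝ) (w : K → ℝ) (hw0 : ∀ k, 0 ≤ w k) (hwpos : ∃ k, 0 < w k)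
    (hcw : ∀ k, c * w k ≤ A.mulVec w k)
    (ρ : ℝ) (u : K → ℝ) (hu : ∀ k, 0 < u k) (hAu : ∀ k, A.mulVec u k ≤ ρ * u k) :
    c ≤ ρ := by
  obtain ⟨k0, -, hk0⟩ := Finset.exists_max_image Finset.univ (fun k => w k / u k)
    ⟨Classical.arbitrary K, Finset.mem_univ _⟩
  obtain ⟨k1, hk1⟩ := hwpos
  set t := w k0 / u k0 with ht
  have htpos : 0 < t := lt_of_lt_of_le (div_pos hk1 (hu k1)) (hk0 k1 (Finset.mem_univ _))
  have hwk0 : w k0 = t * u k0 := (div_mul_cancel₀ (w k0) (hu k0).ne').symm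
  have hle : ∀ k, w k ≤ t * u k := by
    intro k
    have := hk0 k (Finset.mem_univ _)
    rw [div_le_iff₀ (hu k)] at this
    linarith [this]
  have key : c * w k0 ≤ ρ * w k0 := by
    calc c * w k0 ≤ A.mulVec w k0 := hcw k0
      _ = ∑ s, A k0 s * w s := rfl
      _ ≤ ∑ s, A k0 s * (t * u s) :=
          Finset.sum_le_sum fun s _ => mul_le_mul_of_nonneg_left (hle s) (hA k0 s)
      _ = t * ∑ s, A k0 s * u s := by rw [Finset.mul_sum]; exact Finset.sum_congr rfl fun s _ => by ring
      _ = t * A.mulVec u k0 := rfl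
      _ ≤ t * (ρ * u k0) := mul_le_mul_of_nonneg_left (hAu k0) htpos.le
      _ = ρ * w k0 := by rw [hwk0]; ring
  have hwk0pos : 0 < w k0 := hwk0 ▸ mul_pos htpos (hu k0)
  exact le_of_mul_le_mul_right (by linarith) hwk0pos

/-- Perron–Frobenius for irreducible nonnegative matrices: existence of a positive
eigenvalue with positive eigenvector. -/
lemma perron (A : Matrix K K ℝ) (hA : ∀ k s, 0 ≤ A k s)
    (hirr : ∀ k s, ∃ n, 1 ≤ n ∧ 0 < (A ^ n) k s) :
    ∃ r : ℝ, 0 < r ∧ ∃ w : K → ℝ, (∀ k, 0 < w k) ∧ ∀ k, A.mulVec w k = r * w k := by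
  classical
  -- upper bound for feasible ratios
  set C : ℝ := ∑ k, ∑ s, A k s with hC
  have hC0 : 0 ≤ C := Finset.sum_nonneg fun k _ => Finset.sum_nonneg fun s _ => hA k s
  have hrowC : ∀ k, ∑ s, A k s ≤ C := fun k =>
    Finset.single_le_sum (f := fun k => ∑ s, A k s)
      (fun k _ => Finset.sum_nonneg fun s _ => hA k s) (Finset.mem_univ k)
  have hsimppos : ∀ w : K → ℝ, w ∈ stdSimplex ℝ K → ∃ k, 0 < w k := by
    intro w hw
    by_contra hno
    push_neg at hno
    have : ∀ k, w k = 0 := fun k => le_antisymm (hno k) (hw.1 k)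
    have h2 := hw.2
    rw [Finset.sum_eq_zero (fun k _ => this k)] at h2
    exact zero_ne_one h2
  have hfeas : ∀ (c : ℝ) (w : K → ℝ), w ∈ stdSimplex ℝ K →
      (∀ k, c * w k ≤ A.mulVec w k) → c ≤ C := by
    intro c w hw hc
    obtain ⟨k0, -, hk0⟩ := Finset.exists_max_image Finset.univ w
      ⟨Classical.arbitrary K, Finset.mem_univ _⟩
    obtain ⟨k1, hk1⟩ := hsimppos w hw
    have hk0pos : 0 < w k0 := lt_of_lt_of_le hk1 (hk0 k1 (Finset.mem_univ _))
    have : c * w k0 ≤ C * w k0 := by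
      calc c * w k0 ≤ A.mulVec w k0 := hc k0
        _ = ∑ s, A k0 s * w s := rfl
        _ ≤ ∑ s, A k0 s * w k0 :=
            Finset.sum_le_sum fun s _ =>
              mul_le_mul_of_nonneg_left (hk0 s (Finset.mem_univ _)) (hA k0 s)
        _ = (∑ s, A k0 s) * w k0 := by rw [Finset.sum_mul]
        _ ≤ C * w k0 := mul_le_mul_of_nonneg_right (hrowC k0) hk0pos.le
    exact le_of_mul_le_mul_right this hk0pos
  -- the compact feasible set
  set T : Set (ℝ × (K → ℝ)) :=
    {p | p.1 ∈ Set.Icc 0 C ∧ p.2 ∈ stdSimplex ℝ K ∧ ∀ k, p.1 * p.2 k ≤ A.mulVec p.2 k} with hT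
  have hTclosed : IsClosed T := by
    have h1 : IsClosed {p : ℝ × (K → ℝ) | p.1 ∈ Set.Icc 0 C} :=
      isClosed_Icc.preimage continuous_fst
    have h2 : IsClosed {p : ℝ × (K → ℝ) | p.2 ∈ stdSimplex ℝ K} :=
      (isClosed_stdSimplex ℝ K).preimage continuous_snd
    have h3 : IsClosed {p : ℝ × (K → ℝ) | ∀ k, p.1 * p.2 k ≤ A.mulVec p.2 k} := by
      have heq : {p : ℝ × (K → ℝ) | ∀ k, p.1 * p.2 k ≤ A.mulVec p.2 k} =
          ⋂ k, {p : ℝ × (K → ℝ) | p.1 * p.2 k ≤ A.mulVec p.2 k} := by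
        ext p; simp
      rw [heq]
      refine isClosed_iInter fun k => isClosed_le ?_ ?_
      · exact continuous_fst.mul ((continuous_apply k).comp continuous_snd)
      · have : (fun p : ℝ × (K → ℝ) => A.mulVec p.2 k) =
            fun p => ∑ s, A k s * p.2 s := rfl
        rw [this]
        exact continuous_finset_sum _ fun s _ =>
          continuous_const.mul ((continuous_apply s).comp continuous_snd)
    have : T = _ ∩ (_ ∩ _) := rfl
    exact h1.inter (h2.inter h3)
  have hTcompact : IsCompact T := by
    refine IsCompact.of_isClosed_subset ((isCompact_Icc (a := (0:ℝ)) (b := C)).prod (isCompact_stdSimplex ℝ K))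
      hTclosed ?_
    intro p hp
    exact Set.mem_prod.mpr ⟨hp.1, hp.2.1⟩
  have hTne : T.Nonempty := by
    refine ⟨(0, fun _ => (Fintype.card K : ℝ)⁻¹), ?_, ?_, ?_⟩
    · exact ⟨le_refl 0, hC0⟩
    · constructor
      · intro k; positivity
      · rw [Finset.sum_const, Finset.card_univ, nsmul_eq_mul]
        field_simp
    · intro k
      simp only [zero_mul]
      exact Finset.sum_nonneg fun s _ => mul_nonneg (hA k s) (by positivity)
  -- the Collatz–Wielandt value
  set S : Set ℝ := Prod.fst '' T with hS
  have hScompact : IsCompact S := hTcompact.image continuous_fst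
  have hSne : S.Nonempty := hTne.image _
  set r : ℝ := sSup S with hr
  have hrS : r ∈ S := hScompact.sSup_mem hSne
  obtain ⟨p, hpT, hpr⟩ := hrS
  set w : K → ℝ := p.2 with hwdef
  have hp1 : p.1 = r := hpr
  have hrIcc : r ∈ Set.Icc 0 C := hp1 ▸ hpT.1
  have hwsimp : w ∈ stdSimplex ℝ K := hpT.2.1
  have hle : ∀ k, r * w k ≤ A.mulVec w k := by
    intro k; have := hpT.2.2 k; rwa [hp1] at this
  -- any feasible pair gives a lower bound for r
  have hfeasr : ∀ (c : ℝ) (w' : K → ℝ), (∀ k, 0 ≤ w' k) → (∃ k, 0 < w' k) →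
      (∀ k, c * w' k ≤ A.mulVec w' k) → c ≤ r := by
    intro c w' h0 hpos hc
    rcases le_or_gt c 0 with h | h
    · exact le_trans h hrIcc.1
    · obtain ⟨k1, hk1⟩ := hpos
      set σ : ℝ := ∑ k, w' k with hσdef
      have hσ : 0 < σ := Finset.sum_pos' (fun k _ => h0 k) ⟨k1, Finset.mem_univ _, hk1⟩
      set w'' : K → ℝ := σ⁻¹ • w' with hw''
      have hw''simp : w'' ∈ stdSimplex ℝ K := by
        constructor
        · intro k
          simp only [hw'', Pi.smul_apply, smul_eq_mul]
          exact mul_nonneg (inv_nonneg.mpr hσ.le) (h0 k)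
        · simp only [hw'', Pi.smul_apply, smul_eq_mul, ← Finset.mul_sum, ← hσdef]
          field_simp
      have hc'' : ∀ k, c * w'' k ≤ A.mulVec w'' k := by
        intro k
        have := hc k
        have hmv : A.mulVec w'' k = σ⁻¹ * A.mulVec w' k := by
          rw [hw'', mulVec_smul]; simp
        rw [hmv]
        simp only [hw'', Pi.smul_apply, smul_eq_mul, hmv]
        have hσinv : 0 ≤ σ⁻¹ := inv_nonneg.mpr hσ.le
        calc c * (σ⁻¹ * w' k) = σ⁻¹ * (c * w' k) := by ring
          _ ≤ σ⁻¹ * A.mulVec w' k := mul_le_mul_of_nonneg_left this hσinv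
      have hcC : c ≤ C := hfeas c w'' hw''simp hc''
      have : (c, w'') ∈ T := ⟨⟨h.le, hcC⟩, hw''simp, hc''⟩
      exact le_csSup hScompact.bddAbove ⟨(c, w''), this, rfl⟩
  -- the eigen-equality
  obtain ⟨s0, hs0⟩ := hsimppos w hwsimp
  have hnfspec : ∀ k s, 1 ≤ (hirr k s).choose ∧ 0 < (A ^ (hirr k s).choose) k s :=
    fun k s => (hirr k s).choose_spec
  have heig : ∀ k, A.mulVec w k = r * w k := by
    by_contra hne
    push_neg at hne
    obtain ⟨k1, hk1ne⟩ := hne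
    have hk1 : r * w k1 < A.mulVec w k1 := lt_of_le_of_ne (hle k1) (Ne.symm hk1ne)
    -- smoothing matrix P with all entries positive
    set nf : K → K → ℕ := fun k s => (hirr k s).choose with hnf
    set M : ℕ := Finset.univ.sup fun k => Finset.univ.sup (nf k) with hM
    have hnfle : ∀ k s, nf k s ≤ M :=
      fun k s => le_trans (Finset.le_sup (Finset.mem_univ s))
        (Finset.le_sup (f := fun k => Finset.univ.sup (nf k)) (Finset.mem_univ k))
    set P : Matrix K K ℝ := ∑ j ∈ Finset.range (M + 1), A ^ j with hP
    have hPapp : ∀ k s, P k s = ∑ j ∈ Finset.range (M + 1), (A ^ j) k s := by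
      intro k s
      rw [hP]
      simp [Matrix.sum_apply]
    have hP0 : ∀ k s, 0 ≤ P k s := by
      intro k s
      rw [hPapp]
      exact Finset.sum_nonneg fun j _ => pow_entry_nonneg A hA j k s
    have hPpos : ∀ k s, 0 < P k s := by
      intro k s
      rw [hPapp]
      have hmem : nf k s ∈ Finset.range (M + 1) :=
        Finset.mem_range.mpr (Nat.lt_succ_of_le (hnfle k s))
      exact lt_of_lt_of_le (hnfspec k s).2
        (Finset.single_le_sum (fun j _ => pow_entry_nonneg A hA j k s) hmem)
    set z : K → ℝ := P.mulVec w with hz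
    have hzpos : ∀ k, 0 < z k := by
      intro k
      have : P k s0 * w s0 ≤ z k :=
        Finset.single_le_sum (f := fun s => P k s * w s)
          (fun s _ => mul_nonneg (hP0 k s) (hwsimp.1 s)) (Finset.mem_univ s0)
      exact lt_of_lt_of_le (mul_pos (hPpos k s0) hs0) this
    set y : K → ℝ := fun k => A.mulVec w k - r * w k with hy
    have hy0 : ∀ k, 0 ≤ y k := fun k => sub_nonneg.mpr (hle k)
    have hy1 : 0 < y k1 := sub_pos.mpr hk1
    have hcomm : A * P = P * A := by
      rw [hP, Finset.mul_sum, Finset.sum_mul]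
      exact Finset.sum_congr rfl fun j _ => by
        rw [← pow_succ', ← pow_succ]
    have hAz : A.mulVec z = P.mulVec (A.mulVec w) := by
      rw [hz, mulVec_mulVec, hcomm, ← mulVec_mulVec]
    have hyvec : y = A.mulVec w - r • w := by
      funext k; simp [hy, Pi.sub_apply, Pi.smul_apply, smul_eq_mul]
    have hPy : P.mulVec y = fun k => A.mulVec z k - r * z k := by
      funext k
      rw [hyvec, mulVec_sub, mulVec_smul]
      simp [hAz, hz, Pi.sub_apply, Pi.smul_apply, smul_eq_mul, hcomm]
    have hPypos : ∀ k, 0 < P.mulVec y k := by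
      intro k
      have : P k k1 * y k1 ≤ P.mulVec y k :=
        Finset.single_le_sum (f := fun s => P k s * y s)
          (fun s _ => mul_nonneg (hP0 k s) (hy0 s)) (Finset.mem_univ k1)
      exact lt_of_lt_of_le (mul_pos (hPpos k k1) hy1) this
    obtain ⟨k0, -, hk0⟩ := Finset.exists_min_image Finset.univ
      (fun k => P.mulVec y k / z k) ⟨Classical.arbitrary K, Finset.mem_univ _⟩
    set ε : ℝ := P.mulVec y k0 / z k0 with hε
    have hεpos : 0 < ε := div_pos (hPypos k0) (hzpos k0)
    have hfeed : ∀ k, (r + ε) * z k ≤ A.mulVec z k := by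
      intro k
      have h1 : ε ≤ P.mulVec y k / z k := hk0 k (Finset.mem_univ _)
      have h2 : ε * z k ≤ P.mulVec y k := (le_div_iff₀ (hzpos k)).mp h1
      have h3 := congrFun hPy k
      linarith
    have := hfeasr (r + ε) z (fun k => (hzpos k).le) ⟨s0, hzpos s0⟩ hfeed
    linarith
  -- positivity of r
  have hpow : ∀ n, (A ^ n).mulVec w = fun k => r ^ n * w k := by
    intro n
    induction n with
    | zero => funext k; simp [Matrix.one_mulVec]
    | succ n ih =>
      funext k
      rw [pow_succ', ← mulVec_mulVec, ih]
      have : (fun k => r ^ n * w k) = r ^ n • w := by funext k; simp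
      rw [this, mulVec_smul]
      simp only [Pi.smul_apply, smul_eq_mul]
      rw [heig k]
      ring
    
  have hr0 : 0 ≤ r := hrIcc.1
  have hlbpow : ∀ k, r ^ ((hirr k s0).choose) * w k ≥ (A ^ (hirr k s0).choose) k s0 * w s0 := by
    intro k
    have h1 := congrFun (hpow ((hirr k s0).choose)) k
    have h2 : (A ^ (hirr k s0).choose) k s0 * w s0 ≤ (A ^ (hirr k s0).choose).mulVec w k :=
      Finset.single_le_sum (f := fun s => (A ^ (hirr k s0).choose) k s * w s)
        (fun s _ => mul_nonneg (pow_entry_nonneg A hA _ k s) (hwsimp.1 s))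
        (Finset.mem_univ s0)
    rw [h1] at h2
    exact h2
  have hrpos : 0 < r := by
    rcases eq_or_lt_of_le hr0 with h | h
    · exfalso
      have hlb := hlbpow s0
      have hn1 := (hnfspec s0 s0).1
      have hnpos := (hnfspec s0 s0).2
      rw [← h, zero_pow (by omega : (hirr s0 s0).choose ≠ 0)] at hlb
      nlinarith
    · exact h
  have hwpos : ∀ k, 0 < w k := by
    intro k
    have hlb := hlbpow k
    have hnpos := (hnfspec k s0).2
    have hrn : 0 < r ^ ((hirr k s0).choose) := pow_pos hrpos _
    nlinarith
  exact ⟨r, hrpos, w, hwpos, heig⟩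


lemma pow_entry_lb (A B : Matrix K K ℝ) (hB : ∀ k s, 0 ≤ B k s) (c : ℝ) (hc : 0 ≤ c)
    (h : ∀ k s, c * B k s ≤ A k s) : ∀ n k s, c ^ n * (B ^ n) k s ≤ (A ^ n) k s := by
  have hA : ∀ k s, 0 ≤ A k s := fun k s => le_trans (mul_nonneg hc (hB k s)) (h k s)
  intro n
  induction n with
  | zero => intro k s; simp
  | succ n ih =>
    intro k s
    have expand : ∀ (M : Matrix K K ℝ), (M ^ (n+1)) k s = ∑ t, (M ^ n) k t * M t s :=
      fun M => by rw [pow_succ, Matrix.mul_apply]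
    rw [expand, expand, Finset.mul_sum]
    refine Finset.sum_le_sum fun t _ => ?_
    have h1 := ih k t
    have h2 := h t s
    have hBn := pow_entry_nonneg B hB n k t
    have key : (c ^ n * (B ^ n) k t) * (c * B t s) ≤ (A ^ n) k t * A t s :=
      mul_le_mul h1 h2 (mul_nonneg hc (hB t s)) (pow_entry_nonneg A hA n k t)
    calc c ^ (n + 1) * ((B ^ n) k t * B t s)
        = (c ^ n * (B ^ n) k t) * (c * B t s) := by ring
      _ ≤ (A ^ n) k t * A t s := key


lemma diag_mul_mulVec {α : Type*} [CommRing α] (v : K → α) (M : Matrix K K α) (x : K → α) (k : K) :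
    ((Matrix.diagonal v * M) *ᵥ x) k = v k * (M *ᵥ x) k := by
  rw [← mulVec_mulVec, mulVec_diagonal]

lemma mem_spec_of_mulVec (M : Matrix K K ℂ) (μ : ℂ) (v : K → ℂ) (hv : v ≠ 0)
    (h : M.mulVec v = μ • v) : μ ∈ spectrum ℂ M := by
  rw [spectrum.mem_iff]
  intro hunit
  apply hv
  have h0 : (algebraMap ℂ (Matrix K K ℂ) μ - M).mulVec v = 0 := by
    rw [Algebra.algebraMap_eq_smul_one, sub_mulVec, smul_mulVec, one_mulVec, h, sub_self]
  have h1 : ((hunit.unit⁻¹ : (Matrix K K ℂ)ˣ) : Matrix K K ℂ).mulVec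
      ((algebraMap ℂ (Matrix K K ℂ) μ - M).mulVec v) = v := by
    rw [mulVec_mulVec]
    have : ((hunit.unit⁻¹ : (Matrix K K ℂ)ˣ) : Matrix K K ℂ) *
        (algebraMap ℂ (Matrix K K ℂ) μ - M) = 1 := by
      exact hunit.val_inv_mul
    rw [this, one_mulVec]
  rw [h0, mulVec_zero] at h1
  exact h1.symm

lemma eigen_of_mem_spec (M : Matrix K K ℂ) (μ : ℂ) (h : μ ∈ spectrum ℂ M) :
    ∃ v, v ≠ 0 ∧ M.mulVec v = μ • v := by
  rw [spectrum.mem_iff] at h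
  have hdet : (algebraMap ℂ (Matrix K K ℂ) μ - M).det = 0 := by
    by_contra hd
    exact h ((Matrix.isUnit_iff_isUnit_det _).mpr (isUnit_iff_ne_zero.mpr hd))
  obtain ⟨v, hv, h0⟩ := (Matrix.exists_mulVec_eq_zero_iff).mpr hdet
  refine ⟨v, hv, ?_⟩
  rw [Algebra.algebraMap_eq_smul_one, sub_mulVec, smul_mulVec, one_mulVec,
    sub_eq_zero] at h0
  exact h0.symm

lemma mulVec_map_ofReal (A : Matrix K K ℝ) (v : K → ℝ) :
    (A.map Complex.ofReal).mulVec (fun k => (v k : ℂ)) = fun k => ((A.mulVec v k : ℝ) : ℂ) := by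
  funext k
  simp only [Matrix.mulVec, dotProduct, Matrix.map_apply]
  push_cast
  rfl


lemma specRad_eq_perron (A : Matrix K K ℝ) (hA : ∀ k s, 0 ≤ A k s)
    (r : ℝ) (hr : 0 < r) (w : K → ℝ) (hw : ∀ k, 0 < w k)
    (heig : ∀ k, A.mulVec w k = r * w k) : specRad A = r := by
  apply IsGreatest.csSup_eq
  constructor
  · refine ⟨(r : ℂ), ?_, ?_⟩
    · apply mem_spec_of_mulVec _ _ (fun k => (w k : ℂ))
      · intro h0
        have := congrFun h0 (Classical.arbitrary K)
        simp only [Pi.zero_apply, Complex.ofReal_eq_zero] at this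
        exact (hw _).ne' this
      · rw [mulVec_map_ofReal]
        funext k
        rw [heig k]
        simp [Pi.smul_apply, smul_eq_mul]
    · rw [Complex.norm_real, Real.norm_eq_abs, abs_of_pos hr]
  · rintro x ⟨μ, hμ, rfl⟩
    obtain ⟨v, hv, hMv⟩ := eigen_of_mem_spec _ _ hμ
    obtain ⟨k2, hk2⟩ := Function.ne_iff.mp hv
    refine wielandt A hA (‖μ‖) (fun k => ‖v k‖)
      (fun k => (norm_nonneg _)) ⟨k2, norm_pos_iff.mpr hk2⟩ ?_
      r w hw (fun k => (heig k).le)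
    intro k
    have h2 : (A.map Complex.ofReal).mulVec v k = μ * v k := by
      rw [hMv]; simp [Pi.smul_apply, smul_eq_mul]
    calc ‖μ‖ * ‖v k‖
        = ‖(A.map Complex.ofReal).mulVec v k‖ := by rw [h2, norm_mul]
      _ = ‖∑ s, (A k s : ℂ) * v s‖ := rfl
      _ ≤ ∑ s, ‖(A k s : ℂ) * v s‖ := norm_sum_le _ _
      _ = ∑ s, A k s * ‖v s‖ := by
          refine Finset.sum_congr rfl fun s _ => ?_
          rw [norm_mul, Complex.norm_real, Real.norm_eq_abs, abs_of_nonneg (hA k s)]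
      _ = A.mulVec (fun k => ‖v k‖) k := rfl


end Aux


/-- Stability/instability of the disease-free equilibrium of the SIS coinfection
model with host classes, in terms of `R₀`. -/
theorem dfe_stability {K : Type*} [Fintype K] [DecidableEq K] [Nonempty K]
    (β r γ : K → ℝ) (hβ : ∀ k, 0 < β k) (hr : ∀ k, 0 < r k) (hγ : ∀ k, 0 < γ k)
    (Q : Matrix K K ℝ) (hQ : ∀ k s, 0 ≤ Q k s)
    (hQirr : ∀ k s, ∃ n : ℕ, 1 ≤ n ∧ 0 < (Q ^ n) k s)
    (R : K → ℝ) (hR : ∀ k, R k = β k / (r k + γ k))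
    (R₀ : ℝ) (hR₀ : R₀ = specRad (Matrix.diagonal R * Q))
    (J : Matrix K K ℝ)
    (hJ : J = Matrix.diagonal β * Q - Matrix.diagonal (fun k => r k + γ k)) :
    (R₀ < 1 → ∀ μ ∈ spectrum ℂ (J.map Complex.ofReal), μ.re < 0) ∧
    (1 < R₀ → ∃ μ ∈ spectrum ℂ (J.map Complex.ofReal), 0 < μ.re) := by
  classical
  have hd : ∀ k, 0 < r k + γ k := fun k => add_pos (hr k) (hγ k)
  have hRpos : ∀ k, 0 < R k := fun k => (hR k) ▸ div_pos (hβ k) (hd k)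
  set A : Matrix K K ℝ := Matrix.diagonal R * Q with hAdef
  have hAapp : ∀ k s, A k s = R k * Q k s := by
    intro k s
    rw [hAdef, Matrix.diagonal_mul]
  have hAmul : ∀ (x : K → ℝ) k, A.mulVec x k = R k * Q.mulVec x k := by
    intro x k
    rw [hAdef, diag_mul_mulVec]
  have hJmul : ∀ (x : K → ℝ) k, J.mulVec x k = β k * Q.mulVec x k - (r k + γ k) * x k := by
    intro x k
    rw [hJ, sub_mulVec]
    simp only [Pi.sub_apply, diag_mul_mulVec, mulVec_diagonal]
  have hA0 : ∀ k s, 0 ≤ A k s := by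
    intro k s
    rw [hAapp]
    exact mul_nonneg (hRpos k).le (hQ k s)
  set cR : ℝ := Finset.univ.inf' Finset.univ_nonempty R with hcRdef
  have hcR : 0 < cR := (Finset.lt_inf'_iff _).mpr fun k _ => hRpos k
  have hcRle : ∀ k, cR ≤ R k := fun k => Finset.inf'_le _ (Finset.mem_univ k)
  have hAirr : ∀ k s, ∃ n, 1 ≤ n ∧ 0 < (A ^ n) k s := by
    intro k s
    obtain ⟨n, hn1, hnp⟩ := hQirr k s
    refine ⟨n, hn1, lt_of_lt_of_le (mul_pos (pow_pos hcR n) hnp)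
      (pow_entry_lb A Q hQ cR hcR.le ?_ n k s)⟩
    intro k s
    rw [hAapp]
    exact mul_le_mul_of_nonneg_right (hcRle k) (hQ k s)
  obtain ⟨rA, hrApos, wA, hwApos, heigA⟩ := perron A hA0 hAirr
  have hspec : R₀ = rA := by
    rw [hR₀]
    exact specRad_eq_perron A hA0 rA hrApos wA hwApos heigA
  constructor
  · -- stability
    intro h1 μ hμ
    by_contra hre
    push_neg at hre
    obtain ⟨v, hv, hMv⟩ := eigen_of_mem_spec _ _ hμ
    have hJc : J.map Complex.ofReal =
        Matrix.diagonal (fun k => (β k : ℂ)) * Q.map Complex.ofReal -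
        Matrix.diagonal (fun k => ((r k + γ k : ℝ) : ℂ)) := by
      rw [hJ]
      ext k s
      by_cases h : k = s <;>
        simp [h, Matrix.map_apply, Matrix.sub_apply, Matrix.diagonal_mul,
          Matrix.diagonal_apply_eq, Matrix.diagonal_apply_ne]
    have hcomp : ∀ k, (β k : ℂ) * ((Q.map Complex.ofReal).mulVec v) k
        = (μ + ((r k + γ k : ℝ) : ℂ)) * v k := by
      intro k
      have h0 := congrFun hMv k
      rw [hJc, sub_mulVec, ← mulVec_mulVec] at h0
      simp only [Pi.sub_apply, mulVec_diagonal, Pi.smul_apply, smul_eq_mul] at h0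
      linear_combination h0
    set w' : K → ℝ := fun k => ‖v k‖ with hw'
    have hw'0 : ∀ k, 0 ≤ w' k := fun k => norm_nonneg _
    obtain ⟨k2, hk2⟩ := Function.ne_iff.mp hv
    have hw'pos : ∃ k, 0 < w' k := ⟨k2, norm_pos_iff.mpr hk2⟩
    have hQabs : ∀ k, ‖(Q.map Complex.ofReal).mulVec v k‖ ≤ Q.mulVec w' k := by
      intro k
      calc ‖(Q.map Complex.ofReal).mulVec v k‖
          = ‖∑ s, (Q k s : ℂ) * v s‖ := rfl
        _ ≤ ∑ s, ‖(Q k s : ℂ) * v s‖ := norm_sum_le _ _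
        _ = ∑ s, Q k s * w' s := by
            refine Finset.sum_congr rfl fun s _ => ?_
            rw [norm_mul, Complex.norm_real, Real.norm_eq_abs, abs_of_nonneg (hQ k s)]
        _ = Q.mulVec w' k := rfl
    have hclaim : ∀ k, 1 * w' k ≤ A.mulVec w' k := by
      intro k
      rw [one_mul, hAmul]
      have habs : ‖μ + ((r k + γ k : ℝ) : ℂ)‖ * w' k ≤ β k * Q.mulVec w' k := by
        have hcabs := congrArg (‖·‖) (hcomp k)
        rw [norm_mul, norm_mul, Complex.norm_real, Real.norm_eq_abs, abs_of_pos (hβ k)] at hcabs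
        calc ‖μ + ((r k + γ k : ℝ) : ℂ)‖ * w' k
            = β k * ‖(Q.map Complex.ofReal).mulVec v k‖ := hcabs.symm
          _ ≤ β k * Q.mulVec w' k := mul_le_mul_of_nonneg_left (hQabs k) (hβ k).le
      have hrele : (r k + γ k) ≤ ‖μ + ((r k + γ k : ℝ) : ℂ)‖ := by
        have h1' : (r k + γ k : ℝ) ≤ (μ + ((r k + γ k : ℝ) : ℂ)).re := by
          simp only [Complex.add_re, Complex.ofReal_re]
          linarith
        exact le_trans h1' (Complex.re_le_norm _)
      have hkey : (r k + γ k) * w' k ≤ β k * Q.mulVec w' k :=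
        le_trans (mul_le_mul_of_nonneg_right hrele (hw'0 k)) habs
      rw [hR k, div_mul_eq_mul_div, le_div_iff₀ (hd k)]
      nlinarith [hkey]
    have h1le : (1 : ℝ) ≤ rA :=
      wielandt A hA0 1 w' hw'0 hw'pos hclaim rA wA hwApos (fun k => (heigA k).le)
    rw [hspec] at h1
    linarith
  · -- instability
    intro h1
    set m : ℝ := 1 + ∑ k, (r k + γ k) with hm
    have hdm : ∀ k, r k + γ k + 1 ≤ m := by
      intro k
      have : r k + γ k ≤ ∑ j, (r j + γ j) :=
        Finset.single_le_sum (fun j _ => (hd j).le) (Finset.mem_univ k)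
      rw [hm]; linarith
    set N : Matrix K K ℝ :=
      Matrix.of fun k s => β k * Q k s + (if k = s then m - (r k + γ k) else 0) with hN
    have hNapp : ∀ k s, N k s = β k * Q k s + (if k = s then m - (r k + γ k) else 0) :=
      fun k s => rfl
    have hN0 : ∀ k s, 0 ≤ N k s := by
      intro k s
      rw [hNapp]
      have h1' := mul_nonneg (hβ k).le (hQ k s)
      have h2' : (0:ℝ) ≤ if k = s then m - (r k + γ k) else 0 := by
        by_cases h : k = s <;> simp [h] <;> linarith [hdm k, hdm s]
      linarith
    have hNmul : ∀ (x : K → ℝ) k,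
        N.mulVec x k = β k * Q.mulVec x k + (m - (r k + γ k)) * x k := by
      intro x k
      simp only [Matrix.mulVec, dotProduct, hNapp, add_mul, ite_mul, zero_mul,
        Finset.sum_add_distrib, Finset.sum_ite_eq, Finset.sum_ite_eq', Finset.mem_univ, if_true]
      rw [Finset.mul_sum]
      congr 1
      exact Finset.sum_congr rfl fun s _ => by ring
    set cβ : ℝ := Finset.univ.inf' Finset.univ_nonempty β with hcβdef
    have hcβ : 0 < cβ := (Finset.lt_inf'_iff _).mpr fun k _ => hβ k
    have hNirr : ∀ k s, ∃ n, 1 ≤ n ∧ 0 < (N ^ n) k s := by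
      intro k s
      obtain ⟨n, hn1, hnp⟩ := hQirr k s
      refine ⟨n, hn1, lt_of_lt_of_le (mul_pos (pow_pos hcβ n) hnp)
        (pow_entry_lb N Q hQ cβ hcβ.le ?_ n k s)⟩
      intro k s
      rw [hNapp]
      have h1' : cβ * Q k s ≤ β k * Q k s :=
        mul_le_mul_of_nonneg_right (Finset.inf'_le _ (Finset.mem_univ k)) (hQ k s)
      have h2' : (0:ℝ) ≤ if k = s then m - (r k + γ k) else 0 := by
        by_cases h : k = s <;> simp [h] <;> linarith [hdm k, hdm s]
      linarith
    obtain ⟨rN, hrNpos, w, hwpos, heigN⟩ := perron N hN0 hNirr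
    set lam : ℝ := rN - m with hlam
    have hQw : ∀ k, β k * Q.mulVec w k = (lam + (r k + γ k)) * w k := by
      intro k
      have h0 := heigN k
      rw [hNmul] at h0
      rw [hlam]
      linear_combination h0
    have hlampos : 0 < lam := by
      by_contra hneg
      push_neg at hneg
      have hup : ∀ k, A.mulVec w k ≤ 1 * w k := by
        intro k
        rw [one_mul, hAmul, hR k, div_mul_eq_mul_div, div_le_iff₀ (hd k)]
        nlinarith [hQw k, hwpos k, hd k]
      have hle1 : rA ≤ 1 :=
        wielandt A hA0 rA wA (fun k => (hwApos k).le) ⟨Classical.arbitrary K, hwApos _⟩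
          (fun k => (heigA k).ge) 1 w hwpos hup
      rw [hspec] at h1
      linarith
    have hJw : ∀ k, J.mulVec w k = lam * w k := by
      intro k
      rw [hJmul]
      linear_combination hQw k
    refine ⟨(lam : ℂ), ?_, by simpa using hlampos⟩
    apply mem_spec_of_mulVec _ _ (fun k => (w k : ℂ))
    · intro h0
      have := congrFun h0 (Classical.arbitrary K)
      simp only [Pi.zero_apply, Complex.ofReal_eq_zero] at this
      exact (hwpos _).ne' this
    · rw [mulVec_map_ofReal]
      funext k
      rw [hJw k]
      simp
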